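/- Weighted Sobolev inequality on null half-lines (Lemma 3.2). Fix γ ∈ (0,1), reals α, β ≥ 0, t ∈ ℝ, u₀ ∈ ℝ, and B ≥ 0 with sup_{s∈ℝ}|Ψ'(s)| ≤ B. Define the weight w(x) := Λ̄(ū(t,x))^α / Λ(t−x)^β. There is a constant C = C(γ, α, β, B) such that: (i) for every smooth h : ℝ → ℝ such that w·h and w·h' are square-integrable on [t−u₀, ∞) and w(x)·h(x) → 0 as x → +∞, one has sup_{x ≥ t−u₀} w(x)·|h(x)| ≤ C·( ‖w·h‖_{L²([t−u₀,∞))} + ‖w·h'‖_{L²([t−u₀,∞))} ); here {x ≥ t−u₀} is the region Σ⁺_{t,u₀} = {x : u(t,x) ≤ u₀}; (ii) symmetrically, with weight w̃(x) := Λ(t−x)^α / Λ̄(ū(t,x))^β, for every smooth h with w̃·h, w̃·h' square-integrable on the left half-line Σ⁻_{t,ū₀} = {x : ū(t,x) ≤ ū₀} and w̃(x)·h(x) → 0 as x → −∞, one has sup_{Σ⁻_{t,ū₀}} w̃·|h| ≤ C·( ‖w̃·h‖_{L²(Σ⁻_{t,ū₀})} + ‖w̃·h'‖_{L²(Σ⁻_{t,ū₀})}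 ). -/

import Mathlib

open MeasureTheory Filter Set

noncomputable section

/-- partial derivative in the first (time) variable -/
def pd1 (f : ℝ × ℝ → ℝ) (p : ℝ × ℝ) : ℝ := deriv (fun s => f (s, p.2)) p.1

/-- partial derivative in the second (space) variable -/
def pd2 (f : ℝ × ℝ → ℝ) (p : ℝ × ℝ) : ℝ := deriv (fun s => f (p.1, s)) p.2

/-- the Japanese bracket `⟨s⟩ = √(1+s²)` -/
def japb (s : ℝ) : ℝ := Real.sqrt (1 + s^2)

/-- the weight `Λ(s) = Λ̄(s) = ⟨s⟩^{2+2γ}` -/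
def Lam (γ s : ℝ) : ℝ := japb s ^ ((2:ℝ) + 2*γ)

/-- the adapted null coordinate `ū(t,x) = (t+x)/2 − (1/2)∫₀^{t−x}(Ψ'(τ))²dτ` -/
def ubar (Ψ : ℝ → ℝ) (t x : ℝ) : ℝ :=
  (t + x)/2 - (1/2) * ∫ τ in (0:ℝ)..(t - x), (deriv Ψ τ)^2

/-- the null operator `L = ∂_t + ∂_x` (the coordinate vector field `∂_ū`) -/
def Lop (f : ℝ × ℝ → ℝ) : ℝ × ℝ → ℝ := fun p => pd1 f p + pd2 f p

/-- the null operator `L̄ = ((Ψ'(t−x))²+1)/2·∂_t + ((Ψ'(t−x))²−1)/2·∂_x`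
(the coordinate vector field `∂_u`) -/
def Lbar (Ψ : ℝ → ℝ) (f : ℝ × ℝ → ℝ) : ℝ × ℝ → ℝ := fun p =>
  ((deriv Ψ (p.1 - p.2))^2 + 1)/2 * pd1 f p + ((deriv Ψ (p.1 - p.2))^2 - 1)/2 * pd2 f p

lemma my_sqrt_add (x y : ℝ) (hx : 0 ≤ x) (hy : 0 ≤ y) :
    Real.sqrt (x + y) ≤ Real.sqrt x + Real.sqrt y := by
  have h1 : x + y ≤ (Real.sqrt x + Real.sqrt y)^2 := by
    nlinarith [Real.sq_sqrt hx, Real.sq_sqrt hy, Real.sqrt_nonneg x, Real.sqrt_nonneg y]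
  calc Real.sqrt (x + y) ≤ Real.sqrt ((Real.sqrt x + Real.sqrt y)^2) := Real.sqrt_le_sqrt h1
    _ = Real.sqrt x + Real.sqrt y := Real.sqrt_sq (by positivity)

lemma final_from_core (K I1 I2 G : ℝ) (hK : 0 ≤ K) (hI1 : 0 ≤ I1) (hI2 : 0 ≤ I2) (hG : 0 ≤ G)
    (h : G^2 ≤ (2*K+1)*I1 + I2) :
    G ≤ (Real.sqrt (2*K+1) + 1) * (Real.sqrt I1 + Real.sqrt I2) := by
  have h1 : G = Real.sqrt (G^2) := (Real.sqrt_sq hG).symm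
  have h2 : Real.sqrt (G^2) ≤ Real.sqrt ((2*K+1)*I1 + I2) := Real.sqrt_le_sqrt h
  have h3 : Real.sqrt ((2*K+1)*I1 + I2) ≤ Real.sqrt ((2*K+1)*I1) + Real.sqrt I2 :=
    my_sqrt_add _ _ (by positivity) hI2
  have h4 : Real.sqrt ((2*K+1)*I1) = Real.sqrt (2*K+1) * Real.sqrt I1 :=
    Real.sqrt_mul (by linarith) _
  have h5 : Real.sqrt (2*K+1) * Real.sqrt I1 + Real.sqrt I2
      ≤ (Real.sqrt (2*K+1) + 1) * (Real.sqrt I1 + Real.sqrt I2) := by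
    have := Real.sqrt_nonneg (2*K+1)
    have := Real.sqrt_nonneg I1
    have := Real.sqrt_nonneg I2
    nlinarith
  calc G = Real.sqrt (G^2) := h1
    _ ≤ Real.sqrt ((2*K+1)*I1 + I2) := h2
    _ ≤ Real.sqrt ((2*K+1)*I1) + Real.sqrt I2 := h3
    _ = Real.sqrt (2*K+1) * Real.sqrt I1 + Real.sqrt I2 := by rw [h4]
    _ ≤ _ := h5

lemma core_bound_right (K : ℝ) (hK : 0 ≤ K) (g g' q : ℝ → ℝ)
    (hg : ∀ x, HasDerivAt g (g' x) x) (hg'c : Continuous g')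
    (hbound : ∀ x, |g' x| ≤ K * |g x| + |q x|)
    (s : Set ℝ)
    (hi1 : IntegrableOn (fun x => (g x)^2) s) (hi2 : IntegrableOn (fun x => (q x)^2) s)
    (hdecay : Tendsto g atTop (nhds 0))
    (a : ℝ) (ha : Ioi a ⊆ s) :
    (g a)^2 ≤ (2*K+1) * (∫ x in s, (g x)^2) + ∫ x in s, (q x)^2 := by
  have hgc : Continuous g := continuous_iff_continuousAt.2 fun x => (hg x).continuousAt
  set φ : ℝ → ℝ := fun x => 2 * g x * g' x with hφ
  have hder : ∀ x, HasDerivAt (fun y => (g y)^2) (φ x) x := by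
    intro x
    have := (hg x).pow 2
    exact this.congr_deriv (by rw [hφ]; push_cast; ring)
  have hptw : ∀ x, |φ x| ≤ (2*K+1) * (g x)^2 + (q x)^2 := by
    intro x
    have h1 := hbound x
    have h2 : |φ x| = 2 * |g x| * |g' x| := by
      rw [hφ]; simp only [abs_mul]; norm_num
    have h3 : (g x)^2 = |g x|^2 := (sq_abs _).symm
    have h4 : (q x)^2 = |q x|^2 := (sq_abs _).symm
    nlinarith [abs_nonneg (g x), abs_nonneg (q x), abs_nonneg (g' x),
      sq_nonneg (|g x| - |q x|)]
  have hg2i : IntegrableOn (fun x => (g x)^2) (Ioi a) := hi1.mono_set ha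
  have hq2i : IntegrableOn (fun x => (q x)^2) (Ioi a) := hi2.mono_set ha
  have hbnd : IntegrableOn (fun x => (2*K+1) * (g x)^2 + (q x)^2) (Ioi a) :=
    (hg2i.const_mul _).add hq2i
  have hφint : IntegrableOn φ (Ioi a) := by
    apply Integrable.mono' hbnd
    · exact ((continuous_const.mul hgc).mul hg'c).aestronglyMeasurable
    · exact Eventually.of_forall fun x => by
        rw [Real.norm_eq_abs]; exact hptw x
  have hsq : Tendsto (fun x => (g x)^2) atTop (nhds 0) := by
    have := hdecay.mul hdecay
    rw [mul_zero] at this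
    simpa [pow_two] using this
  have key : ∫ x in Ioi a, φ x = 0 - (g a)^2 :=
    integral_Ioi_of_hasDerivAt_of_tendsto' (fun x _ => hder x) hφint hsq
  have h5 : (g a)^2 = ∫ x in Ioi a, (-φ x) := by
    rw [integral_neg, key]; ring
  have h6 : (g a)^2 ≤ ∫ x in Ioi a, ((2*K+1) * (g x)^2 + (q x)^2) := by
    rw [h5]
    exact integral_mono hφint.neg hbnd fun x => by
      have := hptw x; have := neg_abs_le (φ x); simp only [Pi.neg_apply]; linarith
  have h7 : ∫ x in Ioi a, ((2*K+1) * (g x)^2 + (q x)^2)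
      = (2*K+1) * (∫ x in Ioi a, (g x)^2) + ∫ x in Ioi a, (q x)^2 := by
    rw [integral_add (hg2i.const_mul _) hq2i, integral_const_mul]
  have hm1 : ∫ x in Ioi a, (g x)^2 ≤ ∫ x in s, (g x)^2 :=
    setIntegral_mono_set hi1 (Eventually.of_forall fun x => sq_nonneg _)
      (HasSubset.Subset.eventuallyLE ha)
  have hm2 : ∫ x in Ioi a, (q x)^2 ≤ ∫ x in s, (q x)^2 :=
    setIntegral_mono_set hi2 (Eventually.of_forall fun x => sq_nonneg _)
      (HasSubset.Subset.eventuallyLE ha)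
  calc (g a)^2 ≤ (2*K+1) * (∫ x in Ioi a, (g x)^2) + ∫ x in Ioi a, (q x)^2 := by
        rw [← h7]; exact h6
    _ ≤ (2*K+1) * (∫ x in s, (g x)^2) + ∫ x in s, (q x)^2 := by
        have : (0:ℝ) ≤ 2*K+1 := by linarith
        gcongr

lemma core_bound_left (K : ℝ) (hK : 0 ≤ K) (g g' q : ℝ → ℝ)
    (hg : ∀ x, HasDerivAt g (g' x) x) (hg'c : Continuous g')
    (hbound : ∀ x, |g' x| ≤ K * |g x| + |q x|)
    (s : Set ℝ)
    (hi1 : IntegrableOn (fun x => (g x)^2) s) (hi2 : IntegrableOn (fun x => (q x)^2) s)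
    (hdecay : Tendsto g atBot (nhds 0))
    (a : ℝ) (ha : Iic a ⊆ s) :
    (g a)^2 ≤ (2*K+1) * (∫ x in s, (g x)^2) + ∫ x in s, (q x)^2 := by
  have hgc : Continuous g := continuous_iff_continuousAt.2 fun x => (hg x).continuousAt
  set φ : ℝ → ℝ := fun x => 2 * g x * g' x with hφ
  have hder : ∀ x, HasDerivAt (fun y => (g y)^2) (φ x) x := by
    intro x
    have := (hg x).pow 2
    exact this.congr_deriv (by rw [hφ]; push_cast; ring)
  have hptw : ∀ x, |φ x| ≤ (2*K+1) * (g x)^2 + (q x)^2 := by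
    intro x
    have h1 := hbound x
    have h2 : |φ x| = 2 * |g x| * |g' x| := by
      rw [hφ]; simp only [abs_mul]; norm_num
    have h3 : (g x)^2 = |g x|^2 := (sq_abs _).symm
    have h4 : (q x)^2 = |q x|^2 := (sq_abs _).symm
    nlinarith [abs_nonneg (g x), abs_nonneg (q x), abs_nonneg (g' x),
      sq_nonneg (|g x| - |q x|)]
  have hg2i : IntegrableOn (fun x => (g x)^2) (Iic a) := hi1.mono_set ha
  have hq2i : IntegrableOn (fun x => (q x)^2) (Iic a) := hi2.mono_set ha
  have hbnd : IntegrableOn (fun x => (2*K+1) * (g x)^2 + (q x)^2) (Iic a) :=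
    (hg2i.const_mul _).add hq2i
  have hφint : IntegrableOn φ (Iic a) := by
    apply Integrable.mono' hbnd
    · exact ((continuous_const.mul hgc).mul hg'c).aestronglyMeasurable
    · exact Eventually.of_forall fun x => by
        rw [Real.norm_eq_abs]; exact hptw x
  have hsq : Tendsto (fun x => (g x)^2) atBot (nhds 0) := by
    have := hdecay.mul hdecay
    rw [mul_zero] at this
    simpa [pow_two] using this
  have key : ∫ x in Iic a, φ x = (g a)^2 - 0 :=
    integral_Iic_of_hasDerivAt_of_tendsto' (fun x _ => hder x) hφint hsq
  have h6 : (g a)^2 ≤ ∫ x in Iic a, ((2*K+1) * (g x)^2 + (q x)^2) := by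
    rw [show (g a)^2 = ∫ x in Iic a, φ x by rw [key]; ring]
    exact integral_mono hφint hbnd fun x => by
      have := hptw x; have := le_abs_self (φ x); linarith
  have h7 : ∫ x in Iic a, ((2*K+1) * (g x)^2 + (q x)^2)
      = (2*K+1) * (∫ x in Iic a, (g x)^2) + ∫ x in Iic a, (q x)^2 := by
    rw [integral_add (hg2i.const_mul _) hq2i, integral_const_mul]
  have hm1 : ∫ x in Iic a, (g x)^2 ≤ ∫ x in s, (g x)^2 :=
    setIntegral_mono_set hi1 (Eventually.of_forall fun x => sq_nonneg _)
      (HasSubset.Subset.eventuallyLE ha)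
  have hm2 : ∫ x in Iic a, (q x)^2 ≤ ∫ x in s, (q x)^2 :=
    setIntegral_mono_set hi2 (Eventually.of_forall fun x => sq_nonneg _)
      (HasSubset.Subset.eventuallyLE ha)
  calc (g a)^2 ≤ (2*K+1) * (∫ x in Iic a, (g x)^2) + ∫ x in Iic a, (q x)^2 := by
        rw [← h7]; exact h6
    _ ≤ (2*K+1) * (∫ x in s, (g x)^2) + ∫ x in s, (q x)^2 := by
        have : (0:ℝ) ≤ 2*K+1 := by linarith
        gcongr

lemma lam_rpow (γ s c : ℝ) : Lam γ s ^ c = (1 + s^2) ^ (c * (1+γ)) := by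
  unfold Lam japb
  rw [Real.sqrt_eq_rpow, ← Real.rpow_mul (by positivity), ← Real.rpow_mul (by positivity)]
  congr 1
  ring

lemma weight_eq (γ α β : ℝ) (s r : ℝ) :
    Lam γ s ^ α / Lam γ r ^ β
      = (1 + s^2) ^ (α*(1+γ)) * (1 + r^2) ^ (-(β*(1+γ))) := by
  rw [lam_rpow, lam_rpow, Real.rpow_neg (by positivity), div_eq_mul_inv]

lemma ubar_hasDerivAt (Ψ : ℝ → ℝ) (hΨ : Continuous (deriv Ψ)) (t x : ℝ) :
    HasDerivAt (fun y => ubar Ψ t y) ((1 + (deriv Ψ (t - x))^2)/2) x := by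
  have hF : ∀ y, HasDerivAt (fun z => ∫ τ in (0:ℝ)..z, (deriv Ψ τ)^2) ((deriv Ψ y)^2) y :=
    fun y => ((hΨ.pow 2).integral_hasStrictDerivAt 0 y).hasDerivAt
  have h1 : HasDerivAt (fun y : ℝ => t - y) (-1) x := (hasDerivAt_id x).const_sub t
  have h2 := (hF (t - x)).comp x h1
  have h3 : HasDerivAt (fun y : ℝ => (t + y)/2) (1/2) x :=
    ((hasDerivAt_id x).const_add t).div_const 2
  have h4 := h3.sub (h2.const_mul (1/2 : ℝ))
  unfold ubar
  exact h4.congr_deriv (by ring)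

lemma rpow_weight_deriv (u u' : ℝ → ℝ) (x : ℝ) (hu : HasDerivAt u (u' x) x) (c : ℝ) :
    HasDerivAt (fun y => (1 + (u y)^2) ^ c) ((2 * u x * u' x) * c * (1 + (u x)^2) ^ (c-1)) x := by
  have h1 : HasDerivAt (fun y => 1 + (u y)^2) (2 * u x * u' x) x := by
    exact ((hu.pow 2).const_add 1).congr_deriv (by push_cast; ring)
  exact h1.rpow_const (Or.inl (by positivity))

lemma rpow_weight_bound (s c M d : ℝ) (hM : 0 ≤ M) (hd : |d| ≤ M) :
    |(2 * s * d) * c * (1 + s^2) ^ (c-1)| ≤ 2 * |c| * M * (1 + s^2) ^ c := by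
  have hb : (1:ℝ) ≤ 1 + s^2 := by nlinarith [sq_nonneg s]
  have hs : |s| ≤ (1 + s^2) ^ ((1:ℝ)/2) := by
    rw [← Real.sqrt_eq_rpow]
    calc |s| = Real.sqrt (s^2) := (Real.sqrt_sq_eq_abs s).symm
      _ ≤ Real.sqrt (1 + s^2) := Real.sqrt_le_sqrt (by nlinarith)
  have hmul : (1 + s^2) ^ ((1:ℝ)/2) * (1 + s^2) ^ (c-1) = (1 + s^2) ^ (c - 1/2) := by
    rw [← Real.rpow_add (by positivity)]; ring_nf
  have hle : (1 + s^2 : ℝ) ^ (c - 1/2) ≤ (1 + s^2) ^ c :=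
    Real.rpow_le_rpow_of_exponent_le hb (by linarith)
  have hpos : (0:ℝ) < (1 + s^2) ^ (c-1) := Real.rpow_pos_of_pos (by positivity) _
  calc |(2 * s * d) * c * (1 + s^2) ^ (c-1)|
      = 2 * |s| * |d| * |c| * (1 + s^2) ^ (c-1) := by
        rw [abs_mul, abs_mul, abs_mul, abs_mul]
        rw [abs_of_pos hpos]
        norm_num
    _ ≤ 2 * ((1 + s^2) ^ ((1:ℝ)/2)) * M * |c| * (1 + s^2) ^ (c-1) := by
        have h2 : (0:ℝ) ≤ |s| := abs_nonneg s
        have := abs_nonneg d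
        have := abs_nonneg c
        gcongr
    _ = 2 * |c| * M * ((1 + s^2) ^ ((1:ℝ)/2) * (1 + s^2) ^ (c-1)) := by ring
    _ = 2 * |c| * M * (1 + s^2) ^ (c - 1/2) := by rw [hmul]
    _ ≤ 2 * |c| * M * (1 + s^2) ^ c := by
        have := abs_nonneg c
        gcongr

lemma weight_lemma (Ψ : ℝ → ℝ) (hΨd : Continuous (deriv Ψ)) (B : ℝ) (hB : 0 ≤ B)
    (hΨB : ∀ s, |deriv Ψ s| ≤ B) (t p q : ℝ) :
    ∃ W' : ℝ → ℝ, Continuous W' ∧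
      (∀ x, HasDerivAt (fun y => (1 + (ubar Ψ t y)^2) ^ p * (1 + (t - y)^2) ^ q) (W' x) x) ∧
      (∀ x, |W' x| ≤ ((|p| + |q|) * (2*(1+B^2)))
        * ((1 + (ubar Ψ t x)^2) ^ p * (1 + (t - x)^2) ^ q)) := by
  set U : ℝ → ℝ := fun x => ubar Ψ t x with hUdef
  set U' : ℝ → ℝ := fun x => (1 + (deriv Ψ (t - x))^2)/2 with hU'def
  have hU : ∀ x, HasDerivAt U (U' x) x := fun x => ubar_hasDerivAt Ψ hΨd t x
  have hUc : Continuous U := continuous_iff_continuousAt.2 fun x => (hU x).continuousAt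
  have hU'c : Continuous U' := by
    apply Continuous.div_const
    exact continuous_const.add ((hΨd.comp (continuous_const.sub continuous_id)).pow 2)
  set A : ℝ → ℝ := fun x => (1 + (U x)^2) ^ p with hAdef
  set A' : ℝ → ℝ := fun x => (2 * U x * U' x) * p * (1 + (U x)^2) ^ (p-1) with hA'def
  set D : ℝ → ℝ := fun x => (1 + (t - x)^2) ^ q with hDdef
  set D' : ℝ → ℝ := fun x => (2 * (t - x) * (-1)) * q * (1 + (t - x)^2) ^ (q-1) with hD'def
  have hA : ∀ x, HasDerivAt A (A' x) x := fun x => rpow_weight_deriv U U' x (hU x) p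
  have hD : ∀ x, HasDerivAt D (D' x) x := fun x =>
    rpow_weight_deriv (fun y => t - y) (fun _ => -1) x ((hasDerivAt_id x).const_sub t) q
  refine ⟨fun x => A' x * D x + A x * D' x, ?_, fun x => (hA x).mul (hD x), ?_⟩
  · have c1 : Continuous A' := by
      apply Continuous.mul
      · exact ((continuous_const.mul hUc).mul hU'c).mul continuous_const
      · exact (continuous_const.add (hUc.pow 2)).rpow_const fun x => Or.inl (by simp only [Pi.add_apply, Pi.pow_apply]; positivity)
    have c2 : Continuous A :=
      (continuous_const.add (hUc.pow 2)).rpow_const fun x => Or.inl (by simp only [Pi.add_apply, Pi.pow_apply]; positivity)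
    have ct : Continuous (fun x : ℝ => t - x) := continuous_const.sub continuous_id
    have c3 : Continuous D' := by
      apply Continuous.mul
      · exact ((continuous_const.mul ct).mul continuous_const).mul continuous_const
      · exact (continuous_const.add (ct.pow 2)).rpow_const fun x => Or.inl (by simp only [Pi.add_apply, Pi.pow_apply]; positivity)
    have c4 : Continuous D :=
      (continuous_const.add (ct.pow 2)).rpow_const fun x => Or.inl (by simp only [Pi.add_apply, Pi.pow_apply]; positivity)
    exact (c1.mul c4).add (c2.mul c3)
  · intro x
    have hApos : 0 < A x := Real.rpow_pos_of_pos (by positivity) _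
    have hDpos : 0 < D x := Real.rpow_pos_of_pos (by positivity) _
    have hU'b : |U' x| ≤ (1 + B^2)/2 := by
      have h1 := hΨB (t - x)
      have h2 : (deriv Ψ (t-x))^2 ≤ B^2 := by
        rw [← sq_abs]; exact pow_le_pow_left₀ (abs_nonneg _) h1 2
      rw [hU'def, abs_of_nonneg (by positivity)]
      simp only []
      linarith
    have hA'b : |A' x| ≤ 2 * |p| * ((1 + B^2)/2) * A x :=
      rpow_weight_bound (U x) p ((1 + B^2)/2) (U' x) (by positivity) hU'b
    have hD'b : |D' x| ≤ 2 * |q| * (1 + B^2) * D x := by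
      have hthis := rpow_weight_bound (t - x) q 1 (-1) zero_le_one (by norm_num)
      have h1B : (1:ℝ) ≤ 1 + B^2 := by nlinarith
      calc |D' x| ≤ 2 * |q| * 1 * D x := hthis
        _ ≤ 2 * |q| * (1 + B^2) * D x := by
            have := abs_nonneg q
            gcongr
    calc |A' x * D x + A x * D' x| ≤ |A' x| * D x + A x * |D' x| := by
          calc _ ≤ |A' x * D x| + |A x * D' x| := abs_add_le _ _
            _ = |A' x| * D x + A x * |D' x| := by
                rw [abs_mul (A' x) (D x), abs_mul (A x) (D' x),
                  abs_of_pos hDpos, abs_of_pos hApos]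
      _ ≤ (2 * |p| * ((1 + B^2)/2)) * A x * D x + A x * (2 * |q| * (1 + B^2) * D x) := by
          gcongr
      _ ≤ ((|p| + |q|) * (2*(1+B^2))) * (A x * D x) := by
          nlinarith [mul_nonneg (mul_nonneg (abs_nonneg p) (by positivity : (0:ℝ) ≤ 1+B^2))
            (mul_nonneg hApos.le hDpos.le)]

lemma gprops (Ψ : ℝ → ℝ) (hΨd : Continuous (deriv Ψ)) (B : ℝ) (hB : 0 ≤ B)
    (hΨB : ∀ s, |deriv Ψ s| ≤ B) (t p q K : ℝ)
    (hpqK : (|p| + |q|) * (2*(1+B^2)) ≤ K)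
    (h : ℝ → ℝ) (hh : ContDiff ℝ (⊤:ℕ∞) h) :
    ∃ g' : ℝ → ℝ, Continuous g' ∧
      (∀ x, HasDerivAt (fun y => ((1 + (ubar Ψ t y)^2) ^ p * (1 + (t - y)^2) ^ q) * h y)
        (g' x) x) ∧
      (∀ x, |g' x| ≤ K * |((1 + (ubar Ψ t x)^2) ^ p * (1 + (t - x)^2) ^ q) * h x|
         + |((1 + (ubar Ψ t x)^2) ^ p * (1 + (t - x)^2) ^ q) * deriv h x|) := by
  obtain ⟨W', hW'c, hW, hWb⟩ := weight_lemma Ψ hΨd B hB hΨB t p q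
  set w : ℝ → ℝ := fun y => (1 + (ubar Ψ t y)^2) ^ p * (1 + (t - y)^2) ^ q with hwdef
  have hwc : Continuous w := continuous_iff_continuousAt.2 fun x => (hW x).continuousAt
  have hhd : ∀ x, HasDerivAt h (deriv h x) x := fun x =>
    (hh.differentiable (by simp) x).hasDerivAt
  refine ⟨fun x => W' x * h x + w x * deriv h x,
    (hW'c.mul hh.continuous).add (hwc.mul (hh.continuous_deriv (by exact_mod_cast le_top))),
    fun x => (hW x).mul (hhd x), fun x => ?_⟩
  have hwpos : 0 < w x :=
    mul_pos (Real.rpow_pos_of_pos (by positivity) _) (Real.rpow_pos_of_pos (by positivity) _)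
  have h1 : |W' x * h x| ≤ K * |w x * h x| := by
    rw [abs_mul (W' x), abs_mul (w x), abs_of_pos hwpos]
    calc |W' x| * |h x| ≤ (((|p|+|q|)*(2*(1+B^2))) * w x) * |h x| := by
          gcongr
          exact hWb x
      _ ≤ (K * w x) * |h x| := by gcongr
      _ = K * (w x * |h x|) := by ring
  calc |W' x * h x + w x * deriv h x| ≤ |W' x * h x| + |w x * deriv h x| := abs_add_le _ _
    _ ≤ K * |w x * h x| + |w x * deriv h x| := by linarith

/-- **Weighted Sobolev inequality on null half-lines (Lemma 3.2).**
For fixed `γ ∈ (0,1)`, `α, β ≥ 0` and `B ≥ 0` there is a constant `C = C(γ,α,β,B)` such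
that for every smooth `Ψ` with `sup|Ψ'| ≤ B`, every `t`, and every smooth `h` whose
weighted versions are square integrable and decay on the relevant half-line, the weighted
sup bound by the two weighted `L²` norms holds, on both families of half-lines
`Σ⁺_{t,u₀} = {x : t − u₀ ≤ x}` and `Σ⁻_{t,ū₀} = {x : ū(t,x) ≤ ū₀}`. -/
theorem weighted_sobolev_on_null_halflines
    (γ : ℝ) (hγ0 : 0 < γ) (hγ1 : γ < 1)
    (α β : ℝ) (hα : 0 ≤ α) (hβ : 0 ≤ β) (B : ℝ) (hB : 0 ≤ B) :
    ∃ C : ℝ, 0 < C ∧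
      ∀ (Ψ : ℝ → ℝ), ContDiff ℝ (⊤ : ℕ∞) Ψ → (∀ s : ℝ, |deriv Ψ s| ≤ B) →
        -- (i) right half-lines Σ⁺_{t,u₀}
        (∀ (t u₀ : ℝ) (h : ℝ → ℝ), ContDiff ℝ (⊤ : ℕ∞) h →
          IntegrableOn
            (fun x => ((Lam γ (ubar Ψ t x) ^ α / Lam γ (t - x) ^ β) * h x)^2)
            (Ici (t - u₀)) →
          IntegrableOn
            (fun x => ((Lam γ (ubar Ψ t x) ^ α / Lam γ (t - x) ^ β) * deriv h x)^2)
            (Ici (t - u₀)) →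
          Tendsto (fun x => (Lam γ (ubar Ψ t x) ^ α / Lam γ (t - x) ^ β) * h x)
            atTop (nhds 0) →
          ∀ x : ℝ, t - u₀ ≤ x →
            (Lam γ (ubar Ψ t x) ^ α / Lam γ (t - x) ^ β) * |h x| ≤
              C * (Real.sqrt (∫ y in Ici (t - u₀),
                      ((Lam γ (ubar Ψ t y) ^ α / Lam γ (t - y) ^ β) * h y)^2)
                + Real.sqrt (∫ y in Ici (t - u₀),
                      ((Lam γ (ubar Ψ t y) ^ α / Lam γ (t - y) ^ β) * deriv h y)^2))) ∧
        -- (ii) left half-lines Σ⁻_{t,ū₀}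
        (∀ (t ub₀ : ℝ) (h : ℝ → ℝ), ContDiff ℝ (⊤ : ℕ∞) h →
          IntegrableOn
            (fun x => ((Lam γ (t - x) ^ α / Lam γ (ubar Ψ t x) ^ β) * h x)^2)
            {x : ℝ | ubar Ψ t x ≤ ub₀} →
          IntegrableOn
            (fun x => ((Lam γ (t - x) ^ α / Lam γ (ubar Ψ t x) ^ β) * deriv h x)^2)
            {x : ℝ | ubar Ψ t x ≤ ub₀} →
          Tendsto (fun x => (Lam γ (t - x) ^ α / Lam γ (ubar Ψ t x) ^ β) * h x)
            atBot (nhds 0) →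
          ∀ x : ℝ, ubar Ψ t x ≤ ub₀ →
            (Lam γ (t - x) ^ α / Lam γ (ubar Ψ t x) ^ β) * |h x| ≤
              C * (Real.sqrt (∫ y in {y : ℝ | ubar Ψ t y ≤ ub₀},
                      ((Lam γ (t - y) ^ α / Lam γ (ubar Ψ t y) ^ β) * h y)^2)
                + Real.sqrt (∫ y in {y : ℝ | ubar Ψ t y ≤ ub₀},
                      ((Lam γ (t - y) ^ α / Lam γ (ubar Ψ t y) ^ β) * deriv h y)^2))) := by
  have h1γ : (0:ℝ) < 1 + γ := by linarith
  have hα1 : 0 ≤ α*(1+γ) := mul_nonneg hα h1γ.le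
  have hβ1 : 0 ≤ β*(1+γ) := mul_nonneg hβ h1γ.le
  set K : ℝ := (α*(1+γ) + β*(1+γ)) * (2*(1+B^2)) with hKdef
  have hK : 0 ≤ K := mul_nonneg (by linarith) (by positivity)
  refine ⟨Real.sqrt (2*K+1) + 1, by positivity, fun Ψ hΨ hΨB => ?_⟩
  have hΨd : Continuous (deriv Ψ) := hΨ.continuous_deriv (by exact_mod_cast le_top)
  have habs1 : |α*(1+γ)| = α*(1+γ) := abs_of_nonneg hα1
  have habs2 : |(-(β*(1+γ)))| = β*(1+γ) := by rw [abs_neg]; exact abs_of_nonneg hβ1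
  constructor
  · -- part (i)
    intro t u₀ h hh hi1 hi2 hdec x hx
    have weq : ∀ y : ℝ, Lam γ (ubar Ψ t y) ^ α / Lam γ (t - y) ^ β
        = (1 + (ubar Ψ t y)^2) ^ (α*(1+γ)) * (1 + (t - y)^2) ^ (-(β*(1+γ))) :=
      fun y => weight_eq γ α β _ _
    simp only [weq] at hi1 hi2 hdec ⊢
    obtain ⟨g', hg'c, hgder, hgb⟩ := gprops Ψ hΨd B hB hΨB t (α*(1+γ)) (-(β*(1+γ))) K
      (by rw [habs1, habs2]) h hh
    have hsub : Ioi x ⊆ Ici (t - u₀) := fun y hy => le_trans hx (le_of_lt hy)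
    have hcore := core_bound_right K hK
      (fun y => ((1 + (ubar Ψ t y)^2) ^ (α*(1+γ)) * (1 + (t - y)^2) ^ (-(β*(1+γ)))) * h y)
      g'
      (fun y => ((1 + (ubar Ψ t y)^2) ^ (α*(1+γ)) * (1 + (t - y)^2) ^ (-(β*(1+γ)))) * deriv h y)
      hgder hg'c hgb (Ici (t - u₀)) hi1 hi2 hdec x hsub
    have hwpos : 0 < (1 + (ubar Ψ t x)^2) ^ (α*(1+γ)) * (1 + (t - x)^2) ^ (-(β*(1+γ))) :=
      mul_pos (Real.rpow_pos_of_pos (by positivity) _) (Real.rpow_pos_of_pos (by positivity) _)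
    have hI1 : 0 ≤ ∫ y in Ici (t - u₀),
        (((1 + (ubar Ψ t y)^2) ^ (α*(1+γ)) * (1 + (t - y)^2) ^ (-(β*(1+γ)))) * h y)^2 :=
      integral_nonneg fun y => sq_nonneg _
    have hI2 : 0 ≤ ∫ y in Ici (t - u₀),
        (((1 + (ubar Ψ t y)^2) ^ (α*(1+γ)) * (1 + (t - y)^2) ^ (-(β*(1+γ)))) * deriv h y)^2 :=
      integral_nonneg fun y => sq_nonneg _
    have hG2 : (((1 + (ubar Ψ t x)^2) ^ (α*(1+γ)) * (1 + (t - x)^2) ^ (-(β*(1+γ)))) * |h x|)^2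
        = (((1 + (ubar Ψ t x)^2) ^ (α*(1+γ)) * (1 + (t - x)^2) ^ (-(β*(1+γ)))) * h x)^2 := by
      rw [mul_pow, mul_pow, sq_abs]; ring
    exact final_from_core K _ _ _ hK hI1 hI2 (mul_nonneg hwpos.le (abs_nonneg _))
      (by rw [hG2]; exact hcore)
  · -- part (ii)
    intro t ub₀ h hh hi1 hi2 hdec x hx
    have weq : ∀ y : ℝ, Lam γ (t - y) ^ α / Lam γ (ubar Ψ t y) ^ β
        = (1 + (ubar Ψ t y)^2) ^ (-(β*(1+γ))) * (1 + (t - y)^2) ^ (α*(1+γ)) :=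
      fun y => (weight_eq γ α β _ _).trans (mul_comm _ _)
    simp only [weq] at hi1 hi2 hdec ⊢
    obtain ⟨g', hg'c, hgder, hgb⟩ := gprops Ψ hΨd B hB hΨB t (-(β*(1+γ))) (α*(1+γ)) K
      (by rw [habs1, habs2, hKdef]; apply le_of_eq; ring) h hh
    have hU : ∀ y, HasDerivAt (fun z => ubar Ψ t z) ((1 + (deriv Ψ (t - y))^2)/2) y :=
      ubar_hasDerivAt Ψ hΨd t
    have hmono : Monotone (fun y => ubar Ψ t y) :=
      monotone_of_deriv_nonneg (fun y => (hU y).differentiableAt)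
        (fun y => by rw [(hU y).deriv]; positivity)
    have hsub : Iic x ⊆ {y : ℝ | ubar Ψ t y ≤ ub₀} := fun y hy => le_trans (hmono hy) hx
    have hcore := core_bound_left K hK
      (fun y => ((1 + (ubar Ψ t y)^2) ^ (-(β*(1+γ))) * (1 + (t - y)^2) ^ (α*(1+γ))) * h y)
      g'
      (fun y => ((1 + (ubar Ψ t y)^2) ^ (-(β*(1+γ))) * (1 + (t - y)^2) ^ (α*(1+γ))) * deriv h y)
      hgder hg'c hgb {y : ℝ | ubar Ψ t y ≤ ub₀} hi1 hi2 hdec x hsub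
    have hwpos : 0 < (1 + (ubar Ψ t x)^2) ^ (-(β*(1+γ))) * (1 + (t - x)^2) ^ (α*(1+γ)) :=
      mul_pos (Real.rpow_pos_of_pos (by positivity) _) (Real.rpow_pos_of_pos (by positivity) _)
    have hI1 : 0 ≤ ∫ y in {y : ℝ | ubar Ψ t y ≤ ub₀},
        (((1 + (ubar Ψ t y)^2) ^ (-(β*(1+γ))) * (1 + (t - y)^2) ^ (α*(1+γ))) * h y)^2 :=
      integral_nonneg fun y => sq_nonneg _
    have hI2 : 0 ≤ ∫ y in {y : ℝ | ubar Ψ t y ≤ ub₀},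
        (((1 + (ubar Ψ t y)^2) ^ (-(β*(1+γ))) * (1 + (t - y)^2) ^ (α*(1+γ))) * deriv h y)^2 :=
      integral_nonneg fun y => sq_nonneg _
    have hG2 : (((1 + (ubar Ψ t x)^2) ^ (-(β*(1+γ))) * (1 + (t - x)^2) ^ (α*(1+γ))) * |h x|)^2
        = (((1 + (ubar Ψ t x)^2) ^ (-(β*(1+γ))) * (1 + (t - x)^2) ^ (α*(1+γ))) * h x)^2 := by
      rw [mul_pow, mul_pow, sq_abs]; ring
    exact final_from_core K _ _ _ hK hI1 hI2 (mul_nonneg hwpos.le (abs_nonneg _))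
      (by rw [hG2]; exact hcore)
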